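/- Fix an integer r ≥ 1, for every ordered pair (i,j) with 1 ≤ i < j ≤ r an element m_{ij} ∈ ℤ², a function Ω : ℤ² → ℤ, and for every γ ∈ ℤ² a vector n_γ ∈ ℂ² with ⟨γ,n_γ⟩ = 0. Let L̃ ⊆ 𝔤 be the ℂ-submodule spanned by all elements (E_{ij},0)·z^{γ+m_{ij}} (for i < j, γ ∈ ℤ²) and (0, Ω(γ')·n_{γ'})·z^{γ+γ'} (for γ,γ' ∈ ℤ²), where E_{ij} ∈ gl(r,ℂ) is the elementary matrix with a single 1 in position (i,j). Then L̃ is closed under the bracket [·,·]~; in particular (L̃,[·,·]~) is a Lie ring. -/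

import Mathlib

open Finsupp

/-- The pairing `⟨m,n⟩ = m₁n₁ + m₂n₂` between `ℤ²` and `ℂ²`. -/
noncomputable def pairMN (m : Fin 2 → ℤ) (n : Fin 2 → ℂ) : ℂ :=
  (m 0 : ℂ) * n 0 + (m 1 : ℂ) * n 1

/-- Coefficients: pairs `(A, n)` with `A ∈ gl(r,ℂ)` and `n ∈ ℂ²`. -/
abbrev tvCoef (r : ℕ) := Matrix (Fin r) (Fin r) ℂ × (Fin 2 → ℂ)

/-- The module `𝔤 = ⊕_{m ∈ ℤ²} z^m · (gl(r,ℂ) × ℂ²)`. -/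
abbrev tvModule (r : ℕ) := (Fin 2 → ℤ) →₀ tvCoef r

/-- The bracket of pure coefficients. -/
noncomputable def coefBr {r : ℕ} (v : tvCoef r) (m : Fin 2 → ℤ)
    (v' : tvCoef r) (m' : Fin 2 → ℤ) : tvCoef r :=
  (v.1 * v'.1 - v'.1 * v.1 + pairMN m' v.2 • v'.1 - pairMN m v'.2 • v.1,
   pairMN m' v.2 • v'.2 - pairMN m v'.2 • v.2)

/-- The bracket `[·,·]~` on `𝔤`, extended ℂ-bilinearly from pure elements. -/
noncomputable def tvBracket {r : ℕ} (x y : tvModule r) : tvModule r :=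
  x.sum fun m v => y.sum fun m' v' => Finsupp.single (m + m') (coefBr v m v' m')

/-- The ℂ-submodule `L̃` spanned by the type-S generators `(E_{ij},0)z^{γ+m_{ij}}`
(for `i < j`) and the type-K generators `(0, Ω(γ')·n_{γ'})z^{γ+γ'}`. -/
noncomputable def Ltilde (r : ℕ) (mE : Fin r → Fin r → (Fin 2 → ℤ))
    (Ω : (Fin 2 → ℤ) → ℤ) (nvec : (Fin 2 → ℤ) → (Fin 2 → ℂ)) :
    Submodule ℂ (tvModule r) :=
  Submodule.span ℂ
    ({x | ∃ (i j : Fin r) (_ : i < j) (γ : Fin 2 → ℤ),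
        x = Finsupp.single (γ + mE i j) ((Matrix.single i j 1, 0) : tvCoef r)} ∪
     {x | ∃ (γ γ' : Fin 2 → ℤ),
        x = Finsupp.single (γ + γ') ((0, (Ω γ' : ℂ) • nvec γ') : tvCoef r)})
section Aux
variable {r : ℕ}

lemma pairMN_zero (m : Fin 2 → ℤ) : pairMN m 0 = 0 := by simp [pairMN]

lemma pairMN_add (m : Fin 2 → ℤ) (n n' : Fin 2 → ℂ) :
    pairMN m (n + n') = pairMN m n + pairMN m n' := by simp [pairMN]; ring

lemma pairMN_smul (m : Fin 2 → ℤ) (c : ℂ) (n : Fin 2 → ℂ) :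
    pairMN m (c • n) = c * pairMN m n := by simp [pairMN]; ring

lemma coefBr_zero_left (m m' : Fin 2 → ℤ) (v' : tvCoef r) :
    coefBr (0 : tvCoef r) m v' m' = 0 := by
  simp [coefBr, pairMN_zero]

lemma coefBr_zero_right (m m' : Fin 2 → ℤ) (v : tvCoef r) :
    coefBr v m (0 : tvCoef r) m' = 0 := by
  simp [coefBr, pairMN_zero]

lemma coefBr_add_left (m m' : Fin 2 → ℤ) (v w v' : tvCoef r) :
    coefBr (v + w) m v' m' = coefBr v m v' m' + coefBr w m v' m' := by
  simp only [coefBr, Prod.fst_add, Prod.snd_add, Prod.mk_add_mk, Prod.mk.injEq,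
    pairMN_add, add_mul, mul_add, add_smul, smul_add]
  constructor <;> abel

lemma coefBr_add_right (m m' : Fin 2 → ℤ) (v v' w' : tvCoef r) :
    coefBr v m (v' + w') m' = coefBr v m v' m' + coefBr v m w' m' := by
  simp only [coefBr, Prod.fst_add, Prod.snd_add, Prod.mk_add_mk, Prod.mk.injEq,
    pairMN_add, add_mul, mul_add, add_smul, smul_add]
  constructor <;> abel

lemma coefBr_smul_left (m m' : Fin 2 → ℤ) (c : ℂ) (v v' : tvCoef r) :
    coefBr (c • v) m v' m' = c • coefBr v m v' m' := by
  simp only [coefBr, Prod.smul_fst, Prod.smul_snd, Prod.smul_mk, Prod.mk.injEq,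
    pairMN_smul, smul_mul_assoc, mul_smul_comm]
  constructor <;> module

lemma coefBr_smul_right (m m' : Fin 2 → ℤ) (c : ℂ) (v v' : tvCoef r) :
    coefBr v m (c • v') m' = c • coefBr v m v' m' := by
  simp only [coefBr, Prod.smul_fst, Prod.smul_snd, Prod.smul_mk, Prod.mk.injEq,
    pairMN_smul, smul_mul_assoc, mul_smul_comm]
  constructor <;> module

lemma tvBracket_zero_left (y : tvModule r) : tvBracket 0 y = 0 := by
  simp [tvBracket]

lemma tvBracket_zero_right (x : tvModule r) : tvBracket x 0 = 0 := by
  simp [tvBracket]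

lemma tvBracket_add_left (x y z : tvModule r) :
    tvBracket (x + y) z = tvBracket x z + tvBracket y z := by
  unfold tvBracket
  rw [Finsupp.sum_add_index]
  · intro m _
    simp [coefBr_zero_left]
  · intro m _ v w
    rw [← Finsupp.sum_add]
    exact Finsupp.sum_congr fun m' _ => by rw [coefBr_add_left, Finsupp.single_add]

lemma tvBracket_smul_left (c : ℂ) (x y : tvModule r) :
    tvBracket (c • x) y = c • tvBracket x y := by
  unfold tvBracket
  rw [Finsupp.sum_smul_index', Finsupp.smul_sum]
  · exact Finsupp.sum_congr fun m _ => by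
      rw [Finsupp.smul_sum]
      exact Finsupp.sum_congr fun m' _ => by rw [coefBr_smul_left, Finsupp.smul_single]
  · intro m; simp [coefBr_zero_left]

lemma tvBracket_add_right (x y z : tvModule r) :
    tvBracket x (y + z) = tvBracket x y + tvBracket x z := by
  unfold tvBracket
  rw [← Finsupp.sum_add]
  refine Finsupp.sum_congr fun m _ => ?_
  rw [Finsupp.sum_add_index]
  · intro m' _; simp [coefBr_zero_right]
  · intro m' _ v w; rw [coefBr_add_right, Finsupp.single_add]

lemma tvBracket_smul_right (c : ℂ) (x y : tvModule r) :
    tvBracket x (c • y) = c • tvBracket x y := by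
  unfold tvBracket
  rw [Finsupp.smul_sum]
  refine Finsupp.sum_congr fun m v => ?_
  rw [Finsupp.sum_smul_index', Finsupp.smul_sum]
  · exact Finsupp.sum_congr fun m' _ => by rw [coefBr_smul_right, Finsupp.smul_single]
  · intro m'; simp [coefBr_zero_right]

lemma tvBracket_single_single (m m' : Fin 2 → ℤ) (v v' : tvCoef r) :
    tvBracket (Finsupp.single m v) (Finsupp.single m' v') =
      Finsupp.single (m + m') (coefBr v m v' m') := by
  unfold tvBracket
  rw [Finsupp.sum_single_index, Finsupp.sum_single_index]
  · rw [coefBr_zero_right, Finsupp.single_zero]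
  · rw [Finsupp.sum_single_index] <;> simp [coefBr_zero_left]

end Aux

example (r : ℕ) : True := trivial

/-- `L̃` is closed under the bracket `[·,·]~`; in particular `(L̃, [·,·]~)` is a
Lie ring. -/
theorem Ltilde_bracket_closed (r : ℕ) (hr : 1 ≤ r)
    (mE : Fin r → Fin r → (Fin 2 → ℤ))
    (Ω : (Fin 2 → ℤ) → ℤ) (nvec : (Fin 2 → ℤ) → (Fin 2 → ℂ))
    (hn : ∀ γ : Fin 2 → ℤ, pairMN γ (nvec γ) = 0) :
    ∀ x ∈ Ltilde r mE Ω nvec, ∀ y ∈ Ltilde r mE Ω nvec,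
      tvBracket x y ∈ Ltilde r mE Ω nvec := by
  have memS : ∀ (i j : Fin r), i < j → ∀ (m : Fin 2 → ℤ),
      Finsupp.single m ((Matrix.single i j 1, 0) : tvCoef r)
        ∈ Ltilde r mE Ω nvec := by
    intro i j h m
    have : Finsupp.single ((m - mE i j) + mE i j)
        ((Matrix.single i j 1, 0) : tvCoef r) ∈ Ltilde r mE Ω nvec :=
      Submodule.subset_span (Or.inl ⟨i, j, h, m - mE i j, rfl⟩)
    rwa [sub_add_cancel] at this
  have memK : ∀ (γ' m : Fin 2 → ℤ),
      Finsupp.single m ((0, (Ω γ' : ℂ) • nvec γ') : tvCoef r)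
        ∈ Ltilde r mE Ω nvec := by
    intro γ' m
    have : Finsupp.single ((m - γ') + γ')
        ((0, (Ω γ' : ℂ) • nvec γ') : tvCoef r) ∈ Ltilde r mE Ω nvec :=
      Submodule.subset_span (Or.inr ⟨m - γ', γ', rfl⟩)
    rwa [sub_add_cancel] at this
  -- scalar-multiple membership helpers
  have memSc : ∀ (i j : Fin r), i < j → ∀ (m : Fin 2 → ℤ) (a : ℂ),
      Finsupp.single m ((a • Matrix.single i j 1, 0) : tvCoef r)
        ∈ Ltilde r mE Ω nvec := by
    intro i j h m a
    have : ((a • Matrix.single i j 1, 0) : tvCoef r)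
        = a • ((Matrix.single i j 1, 0) : tvCoef r) := by
      simp [Prod.smul_mk]
    rw [this, ← Finsupp.smul_single]
    exact Submodule.smul_mem _ _ (memS i j h m)
  have memKc : ∀ (γ' m : Fin 2 → ℤ) (a : ℂ),
      Finsupp.single m ((0, a • ((Ω γ' : ℂ) • nvec γ')) : tvCoef r)
        ∈ Ltilde r mE Ω nvec := by
    intro γ' m a
    have : ((0, a • ((Ω γ' : ℂ) • nvec γ')) : tvCoef r)
        = a • ((0, (Ω γ' : ℂ) • nvec γ') : tvCoef r) := by
      simp [Prod.smul_mk]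
    rw [this, ← Finsupp.smul_single]
    exact Submodule.smul_mem _ _ (memK γ' m)
  intro x hx y hy
  refine Submodule.span_induction₂
    (p := fun x y _ _ => tvBracket x y ∈ Ltilde r mE Ω nvec)
    ?_ ?_ ?_ ?_ ?_ ?_ ?_ hx hy
  · -- generators
    rintro a b (⟨i, j, hij, γ, rfl⟩ | ⟨γ₁, γ₁', rfl⟩)
        (⟨k, l, hkl, δ, rfl⟩ | ⟨γ₂, γ₂', rfl⟩) <;>
      rw [tvBracket_single_single]
    · -- S-S
      have hco : coefBr ((Matrix.single i j 1, 0) : tvCoef r) (γ + mE i j)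
          ((Matrix.single k l 1, 0) : tvCoef r) (δ + mE k l)
          = (Matrix.single i j 1 * Matrix.single k l 1
             - Matrix.single k l 1 * Matrix.single i j 1, 0) := by
        simp [coefBr, pairMN_zero]
      rw [hco]
      by_cases hjk : j = k
      · subst hjk
        by_cases hli : l = i
        · exact absurd (hli ▸ (hij.trans hkl)) (lt_irrefl i)
        · rw [Matrix.single_mul_single_same, Matrix.single_mul_single_of_ne (h := hli),
            mul_one, sub_zero]
          exact memS i l (hij.trans hkl) _
      · by_cases hli : l = i
        · subst hli
          rw [Matrix.single_mul_single_of_ne (h := hjk), Matrix.single_mul_single_same,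
            zero_sub, mul_one]
          have hneg : ((-(Matrix.single k j 1), 0) : tvCoef r)
              = (((-1 : ℂ)) • Matrix.single k j 1, 0) := by simp
          rw [hneg]
          exact memSc k j (hkl.trans hij) _ _
        · rw [Matrix.single_mul_single_of_ne (h := hjk),
            Matrix.single_mul_single_of_ne (h := hli), sub_zero, Prod.mk_zero_zero,
            Finsupp.single_zero]
          exact Submodule.zero_mem _
    · -- S-K
      have hco : coefBr ((Matrix.single i j 1, 0) : tvCoef r) (γ + mE i j)
          ((0, (Ω γ₂' : ℂ) • nvec γ₂') : tvCoef r) (γ₂ + γ₂')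
          = ((-(pairMN (γ + mE i j) ((Ω γ₂' : ℂ) • nvec γ₂'))) • Matrix.single i j 1, 0) := by
        simp [coefBr, pairMN_zero, neg_smul]
      rw [hco]
      exact memSc i j hij _ _
    · -- K-S
      have hco : coefBr ((0, (Ω γ₁' : ℂ) • nvec γ₁') : tvCoef r) (γ₁ + γ₁')
          ((Matrix.single k l 1, 0) : tvCoef r) (δ + mE k l)
          = ((pairMN (δ + mE k l) ((Ω γ₁' : ℂ) • nvec γ₁')) • Matrix.single k l 1, 0) := by
        simp [coefBr, pairMN_zero]
      rw [hco]
      exact memSc k l hkl _ _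
    · -- K-K
      have hco : coefBr ((0, (Ω γ₁' : ℂ) • nvec γ₁') : tvCoef r) (γ₁ + γ₁')
          ((0, (Ω γ₂' : ℂ) • nvec γ₂') : tvCoef r) (γ₂ + γ₂')
          = (0, (pairMN (γ₂ + γ₂') ((Ω γ₁' : ℂ) • nvec γ₁')) • ((Ω γ₂' : ℂ) • nvec γ₂')
                 - (pairMN (γ₁ + γ₁') ((Ω γ₂' : ℂ) • nvec γ₂')) • ((Ω γ₁' : ℂ) • nvec γ₁')) := by
        simp [coefBr, pairMN_zero]
      rw [hco]
      have hsplit : ((0, (pairMN (γ₂ + γ₂') ((Ω γ₁' : ℂ) • nvec γ₁')) • ((Ω γ₂' : ℂ) • nvec γ₂')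
                 - (pairMN (γ₁ + γ₁') ((Ω γ₂' : ℂ) • nvec γ₂')) • ((Ω γ₁' : ℂ) • nvec γ₁')) : tvCoef r)
          = ((0, (pairMN (γ₂ + γ₂') ((Ω γ₁' : ℂ) • nvec γ₁')) • ((Ω γ₂' : ℂ) • nvec γ₂')) : tvCoef r)
            - ((0, (pairMN (γ₁ + γ₁') ((Ω γ₂' : ℂ) • nvec γ₂')) • ((Ω γ₁' : ℂ) • nvec γ₁')) : tvCoef r) := by
        simp
      rw [hsplit, Finsupp.single_sub]
      exact Submodule.sub_mem _ (memKc γ₂' _ _) (memKc γ₁' _ _)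
  · intro y _; rw [tvBracket_zero_left]; exact Submodule.zero_mem _
  · intro x _; rw [tvBracket_zero_right]; exact Submodule.zero_mem _
  · intro x y z _ _ _ h1 h2; rw [tvBracket_add_left]; exact Submodule.add_mem _ h1 h2
  · intro x y z _ _ _ h1 h2; rw [tvBracket_add_right]; exact Submodule.add_mem _ h1 h2
  · intro c x y _ _ h; rw [tvBracket_smul_left]; exact Submodule.smul_mem _ _ h
  · intro c x y _ _ h; rw [tvBracket_smul_right]; exact Submodule.smul_mem _ _ h
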